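/- Let X be a subset of ℝ^N, let ω be a point of X, and let E be a vector sublattice of the real-valued functions on X containing the restrictions to X of the test functions 1, pr_1, …, pr_N, −pr_1, …, −pr_N and Σ_{k=1}^N pr_k². Let (T_n) be a sequence of weakly nonlinear (sublinear and translatable) and monotone operators from E into the real-valued functions on X such that T_n(h)(x) → h(ω) as n → ∞, for every x ∈ X and each of the test functions h. Then T_n(f)(x) → f(ω) as n → ∞, for every x ∈ X and every bounded f ∈ E that is continuous at ω. -/

import Mathlib

open MeasureTheory Filter Topology Set

/-- **Theorem `thmAltomare`.** Let `X ⊆ ℝ^N`, `ω ∈ X`, and `E` a vector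
sublattice of functions on `X` containing the test functions
`1, ±pr_1, …, ±pr_N, Σ pr_k²`. If `(T n)` is a sequence of weakly nonlinear and
monotone operators from `E` into the real functions on `X` with `T n h x → h ω` for
every `x` and every test function `h`, then `T n f x → f ω` for every `x` and every
bounded `f ∈ E` continuous at `ω`. -/
theorem korovkin_pointwise_at_omega {N : ℕ} (X : Set (Fin N → ℝ)) (ω : X)
    (E : Set (X → ℝ))
    -- `E` is a vector sublattice of `𝓕(X)`
    (hEadd : ∀ f ∈ E, ∀ g ∈ E, f + g ∈ E)
    (hEsmul : ∀ (c : ℝ), ∀ f ∈ E, c • f ∈ E)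
    (hEsup : ∀ f ∈ E, ∀ g ∈ E, f ⊔ g ∈ E)
    -- `E` contains the test functions
    (hone : (fun _ : X => (1 : ℝ)) ∈ E)
    (hpr : ∀ k : Fin N, (fun x : X => (x : Fin N → ℝ) k) ∈ E)
    (hprneg : ∀ k : Fin N, (fun x : X => -((x : Fin N → ℝ) k)) ∈ E)
    (hsq : (fun x : X => ∑ k, ((x : Fin N → ℝ) k) ^ 2) ∈ E)
    -- `(T n)` weakly nonlinear and monotone, from `E` into the functions on `X`
    (T : ℕ → (X → ℝ) → (X → ℝ))
    (hsubadd : ∀ n, ∀ f ∈ E, ∀ g ∈ E, T n (f + g) ≤ T n f + T n g)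
    (hhom : ∀ n, ∀ (α : ℝ), 0 ≤ α → ∀ f ∈ E, T n (α • f) = α • T n f)
    (hmono : ∀ n, ∀ f ∈ E, ∀ g ∈ E, f ≤ g → T n f ≤ T n g)
    (htrans : ∀ n, ∀ f ∈ E, ∀ (α : ℝ), 0 ≤ α →
      T n (f + α • (fun _ : X => (1 : ℝ))) = T n f + α • T n (fun _ : X => (1 : ℝ)))
    -- convergence to the value at `ω` on the test functions
    (htest1 : ∀ x : X, Tendsto (fun n => T n (fun _ => 1) x) atTop (𝓝 1))
    (htestpr : ∀ k : Fin N, ∀ x : X,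
      Tendsto (fun n => T n (fun y : X => (y : Fin N → ℝ) k) x) atTop
        (𝓝 ((ω : Fin N → ℝ) k)))
    (htestprneg : ∀ k : Fin N, ∀ x : X,
      Tendsto (fun n => T n (fun y : X => -((y : Fin N → ℝ) k)) x) atTop
        (𝓝 (-((ω : Fin N → ℝ) k))))
    (htestsq : ∀ x : X,
      Tendsto (fun n => T n (fun y : X => ∑ k, ((y : Fin N → ℝ) k) ^ 2) x) atTop
        (𝓝 (∑ k, ((ω : Fin N → ℝ) k) ^ 2)))
    -- conclusion for every bounded `f ∈ E` which is continuous at `ω`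
    (f : X → ℝ) (hfE : f ∈ E)
    (hfb : ∃ M : ℝ, ∀ x, |f x| ≤ M)
    (hfc : ContinuousAt f ω) :
    ∀ x : X, Tendsto (fun n => T n f x) atTop (𝓝 (f ω)) := by
  classical
  intro x
  -- basic facts about T
  have hzeroE : (0 : X → ℝ) ∈ E := by
    have := hEsmul 0 _ hone
    simpa using this
  have hT0 : ∀ n, T n (0 : X → ℝ) = 0 := by
    intro n
    have := hhom n 0 le_rfl _ hone
    simpa using this
  -- translatability for every real constant
  have tc : ∀ n, ∀ p ∈ E, ∀ c : ℝ,
      T n (p + c • (fun _ : X => (1 : ℝ))) = T n p + c • T n (fun _ : X => (1 : ℝ)) := by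
    intro n p hp c
    rcases le_or_gt 0 c with hc | hc
    · exact htrans n p hp c hc
    · have hmem : p + c • (fun _ : X => (1 : ℝ)) ∈ E := hEadd _ hp _ (hEsmul c _ hone)
      have h2 := htrans n _ hmem (-c) (by linarith)
      have hfun : (p + c • (fun _ : X => (1 : ℝ))) + (-c) • (fun _ : X => (1 : ℝ)) = p := by
        funext y
        simp only [Pi.add_apply, Pi.smul_apply, smul_eq_mul]
        ring
      rw [hfun] at h2
      funext y
      have h3 := congrFun h2 y
      simp only [Pi.add_apply, Pi.smul_apply, smul_eq_mul] at h3 ⊢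
      linarith
  -- negative of f
  have hnegfE : (-f) ∈ E := by
    have := hEsmul (-1) f hfE
    simpa [neg_one_smul] using this
  have hTneg : ∀ n, (0 : X → ℝ) ≤ T n f + T n (-f) := by
    intro n
    have h := hsubadd n f hfE (-f) hnegfE
    have hf0 : f + (-f) = (0 : X → ℝ) := by funext y; simp
    rw [hf0, hT0 n] at h
    exact h
  -- the function φ(y) = Σ (y_k - ω_k)^2
  set ωv : Fin N → ℝ := (ω : Fin N → ℝ) with hωv
  set φ : X → ℝ := fun y => ∑ k, ((y : Fin N → ℝ) k - ωv k) ^ 2 with hφ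
  set c0 : ℝ := ∑ k, (ωv k) ^ 2 with hc0
  have hc0nn : 0 ≤ c0 := Finset.sum_nonneg fun k _ => sq_nonneg _
  -- correction functions h k with h k y = -(2 ω_k y_k)
  set h : Fin N → (X → ℝ) := fun k =>
    if 0 ≤ ωv k then (2 * ωv k) • (fun y : X => -((y : Fin N → ℝ) k))
    else (-(2 * ωv k)) • (fun y : X => ((y : Fin N → ℝ) k)) with hh
  have hhE : ∀ k, h k ∈ E := by
    intro k
    by_cases hk : 0 ≤ ωv k
    · simp only [hh, if_pos hk]; exact hEsmul _ _ (hprneg k)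
    · simp only [hh, if_neg hk]; exact hEsmul _ _ (hpr k)
  have hhval : ∀ k (y : X), h k y = -(2 * ωv k * (y : Fin N → ℝ) k) := by
    intro k y
    by_cases hk : 0 ≤ ωv k
    · simp only [hh, if_pos hk, Pi.smul_apply, smul_eq_mul]; ring
    · simp only [hh, if_neg hk, Pi.smul_apply, smul_eq_mul]; ring
  have hhT : ∀ k, Tendsto (fun n => T n (h k) x) atTop (𝓝 (-(2 * ωv k * ωv k))) := by
    intro k
    by_cases hk : 0 ≤ ωv k
    · have heq : ∀ n, T n (h k) = (2 * ωv k) • T n (fun y : X => -((y : Fin N → ℝ) k)) := by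
        intro n
        simp only [hh, if_pos hk]
        exact hhom n _ (by linarith) _ (hprneg k)
      have h2 : (2 * ωv k) * (-(ωv k)) = -(2 * ωv k * ωv k) := by ring
      rw [← h2]
      simpa only [heq, Pi.smul_apply, smul_eq_mul] using (htestprneg k x).const_mul (2 * ωv k)
    · have heq : ∀ n, T n (h k) = (-(2 * ωv k)) • T n (fun y : X => ((y : Fin N → ℝ) k)) := by
        intro n
        simp only [hh, if_neg hk]
        exact hhom n _ (by push_neg at hk; linarith) _ (hpr k)
      have h2 : (-(2 * ωv k)) * (ωv k) = -(2 * ωv k * ωv k) := by ring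
      rw [← h2]
      simpa only [heq, Pi.smul_apply, smul_eq_mul] using (htestpr k x).const_mul (-(2 * ωv k))
  -- sums of h over finsets
  have key : ∀ s : Finset (Fin N), (∑ k ∈ s, h k) ∈ E ∧
      ∀ n, T n (∑ k ∈ s, h k) ≤ ∑ k ∈ s, T n (h k) := by
    intro s
    induction s using Finset.induction_on with
    | empty =>
      constructor
      · simpa using hzeroE
      · intro n; simp [hT0 n]
    | insert a s hnotmem ih =>
      obtain ⟨ihE, ihT⟩ := ih
      constructor
      · rw [Finset.sum_insert hnotmem]
        exact hEadd _ (hhE _) _ ihE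
      · intro n
        rw [Finset.sum_insert hnotmem, Finset.sum_insert hnotmem]
        calc T n (h _ + ∑ k ∈ _, h k) ≤ T n (h _) + T n (∑ k ∈ _, h k) :=
              hsubadd n _ (hhE _) _ ihE
          _ ≤ T n (h _) + ∑ k ∈ _, T n (h k) := add_le_add_right (ihT n) _
  obtain ⟨SE, ST⟩ := key Finset.univ
  -- decomposition of φ
  have hφdecomp : φ = ((fun y : X => ∑ k, ((y : Fin N → ℝ) k) ^ 2) + ∑ k, h k)
      + c0 • (fun _ : X => (1 : ℝ)) := by
    funext y
    simp only [hφ, Pi.add_apply, Pi.smul_apply, smul_eq_mul, Finset.sum_apply, mul_one, hc0]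
    rw [← Finset.sum_add_distrib, ← Finset.sum_add_distrib]
    refine Finset.sum_congr rfl fun k _ => ?_
    rw [hhval]
    ring
  have hsqSE : ((fun y : X => ∑ k, ((y : Fin N → ℝ) k) ^ 2) + ∑ k, h k) ∈ E :=
    hEadd _ hsq _ SE
  have hφE : φ ∈ E := by
    rw [hφdecomp]
    exact hEadd _ hsqSE _ (hEsmul c0 _ hone)
  have hφnn : (0 : X → ℝ) ≤ φ := by
    intro y
    exact Finset.sum_nonneg fun k _ => sq_nonneg _
  have hφynn : ∀ y : X, 0 ≤ φ y := fun y => hφnn y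
  have hTφlb : ∀ n, (0 : ℝ) ≤ T n φ x := by
    intro n
    have hm := hmono n 0 hzeroE φ hφE hφnn
    calc (0 : ℝ) = T n 0 x := by rw [hT0 n]; rfl
      _ ≤ T n φ x := hm x
  have hTφub : ∀ n, T n φ x ≤ T n (fun y : X => ∑ k, ((y : Fin N → ℝ) k) ^ 2) x
      + (∑ k, T n (h k) x) + c0 * T n (fun _ : X => (1 : ℝ)) x := by
    intro n
    have e1 : T n φ = T n ((fun y : X => ∑ k, ((y : Fin N → ℝ) k) ^ 2) + ∑ k, h k)
        + c0 • T n (fun _ : X => (1 : ℝ)) := by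
      rw [hφdecomp]
      exact htrans n _ hsqSE c0 hc0nn
    have e2 := hsubadd n _ hsq _ SE
    have e3 := ST n
    have e1x := congrFun e1 x
    have e2x := e2 x
    have e3x := e3 x
    simp only [Pi.add_apply, Pi.smul_apply, smul_eq_mul, Finset.sum_apply] at e1x e2x e3x
    rw [e1x]
    have : (∑ k, T n (h k)) x = ∑ k, T n (h k) x := by
      simp [Finset.sum_apply]
    linarith [e3x]
  -- T n φ x → 0
  have hTφ : Tendsto (fun n => T n φ x) atTop (𝓝 0) := by
    have hub : Tendsto (fun n => T n (fun y : X => ∑ k, ((y : Fin N → ℝ) k) ^ 2) x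
        + (∑ k, T n (h k) x) + c0 * T n (fun _ : X => (1 : ℝ)) x) atTop
        (𝓝 (c0 + (∑ k, -(2 * ωv k * ωv k)) + c0 * 1)) :=
      ((htestsq x).add (tendsto_finset_sum _ fun k _ => hhT k)).add ((htest1 x).const_mul c0)
    have hzero : c0 + (∑ k, -(2 * ωv k * ωv k)) + c0 * 1 = 0 := by
      have : ∑ k, -(2 * ωv k * ωv k) = -(2 * c0) := by
        rw [hc0, Finset.mul_sum, ← Finset.sum_neg_distrib]
        exact Finset.sum_congr rfl fun k _ => by ring
      rw [this]; ring
    rw [hzero] at hub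
    exact tendsto_of_tendsto_of_tendsto_of_le_of_le tendsto_const_nhds hub hTφlb hTφub
  -- main ε-argument
  rw [Metric.tendsto_nhds]
  intro ε hε
  obtain ⟨M, hM⟩ := hfb
  have hMnn : 0 ≤ M := le_trans (abs_nonneg _) (hM ω)
  obtain ⟨δ, hδ, hδprop⟩ := Metric.continuousAt_iff.1 hfc (ε / 2) (by linarith)
  set K : ℝ := 2 * M / δ ^ 2 with hK
  have hKnn : 0 ≤ K := by positivity
  -- pointwise estimate  |f y - f ω| ≤ ε/2 + K φ y
  have hest : ∀ y : X, |f y - f ω| ≤ ε / 2 + K * φ y := by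
    intro y
    rcases lt_or_ge (φ y) (δ ^ 2) with hlt | hge
    · have hdist : dist y ω < δ := by
        rw [Subtype.dist_eq, dist_pi_lt_iff hδ]
        intro k
        have h1 : ((y : Fin N → ℝ) k - ωv k) ^ 2 ≤ φ y :=
          Finset.single_le_sum (f := fun k => ((y : Fin N → ℝ) k - ωv k) ^ 2)
            (fun i _ => sq_nonneg _) (Finset.mem_univ k)
        have h2 : ((y : Fin N → ℝ) k - ωv k) ^ 2 < δ ^ 2 := lt_of_le_of_lt h1 hlt
        rw [Real.dist_eq]
        nlinarith [abs_nonneg ((y : Fin N → ℝ) k - ωv k),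
          sq_abs ((y : Fin N → ℝ) k - ωv k)]
      have h3 := hδprop hdist
      rw [Real.dist_eq] at h3
      have h4 : 0 ≤ K * φ y := mul_nonneg hKnn (hφynn y)
      linarith
    · have h5 : |f y - f ω| ≤ |f y| + |f ω| := abs_sub _ _
      have h6 : 2 * M ≤ K * φ y := by
        calc 2 * M = (2 * M / δ ^ 2) * δ ^ 2 := by field_simp
          _ ≤ (2 * M / δ ^ 2) * φ y := by
              apply mul_le_mul_of_nonneg_left hge (by positivity)
      have := hM y
      have := hM ω
      linarith
  -- upper comparison function
  have hKφE : K • φ ∈ E := hEsmul K _ hφE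
  have hTKφ : ∀ n, ∀ c : ℝ, T n (K • φ + c • (fun _ : X => (1 : ℝ)))
      = K • T n φ + c • T n (fun _ : X => (1 : ℝ)) := by
    intro n c
    rw [tc n (K • φ) hKφE c, hhom n K hKnn φ hφE]
  have hfle : f ≤ K • φ + (f ω + ε / 2) • (fun _ : X => (1 : ℝ)) := by
    intro y
    have h1 := hest y
    have h2 : f y - f ω ≤ |f y - f ω| := le_abs_self _
    simp only [Pi.add_apply, Pi.smul_apply, smul_eq_mul, mul_one]
    linarith
  have hnegfle : (-f) ≤ K • φ + (ε / 2 - f ω) • (fun _ : X => (1 : ℝ)) := by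
    intro y
    have h1 := hest y
    simp only [Pi.add_apply, Pi.smul_apply, Pi.neg_apply, smul_eq_mul, mul_one]
    have h3 : f ω - f y ≤ |f y - f ω| := by
      have := neg_le_abs (f y - f ω)
      linarith
    linarith
  have hTup : ∀ n, T n f x ≤ K * T n φ x + (f ω + ε / 2) * T n (fun _ : X => (1 : ℝ)) x := by
    intro n
    have hmem : K • φ + (f ω + ε / 2) • (fun _ : X => (1 : ℝ)) ∈ E :=
      hEadd _ hKφE _ (hEsmul _ _ hone)
    have h1 := hmono n f hfE _ hmem hfle x
    have h2 := congrFun (hTKφ n (f ω + ε / 2)) x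
    simp only [Pi.add_apply, Pi.smul_apply, smul_eq_mul] at h1 h2
    linarith
  have hTlow : ∀ n, -(K * T n φ x) - (ε / 2 - f ω) * T n (fun _ : X => (1 : ℝ)) x
      ≤ T n f x := by
    intro n
    have hmem : K • φ + (ε / 2 - f ω) • (fun _ : X => (1 : ℝ)) ∈ E :=
      hEadd _ hKφE _ (hEsmul _ _ hone)
    have h1 := hmono n (-f) hnegfE _ hmem hnegfle x
    have h2 := congrFun (hTKφ n (ε / 2 - f ω)) x
    have h3 := hTneg n x
    simp only [Pi.add_apply, Pi.smul_apply, Pi.zero_apply, smul_eq_mul] at h1 h2 h3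
    linarith
  have hupl : Tendsto (fun n => K * T n φ x + (f ω + ε / 2) * T n (fun _ : X => (1 : ℝ)) x)
      atTop (𝓝 (K * 0 + (f ω + ε / 2) * 1)) :=
    (hTφ.const_mul K).add ((htest1 x).const_mul _)
  have hlowl : Tendsto (fun n => -(K * T n φ x) - (ε / 2 - f ω) * T n (fun _ : X => (1 : ℝ)) x)
      atTop (𝓝 (-(K * 0) - (ε / 2 - f ω) * 1)) :=
    ((hTφ.const_mul K).neg).sub ((htest1 x).const_mul _)
  have e1 : ∀ᶠ n in atTop,
      K * T n φ x + (f ω + ε / 2) * T n (fun _ : X => (1 : ℝ)) x < f ω + ε :=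
    hupl.eventually_lt_const (by nlinarith)
  have e2 : ∀ᶠ n in atTop,
      f ω - ε < -(K * T n φ x) - (ε / 2 - f ω) * T n (fun _ : X => (1 : ℝ)) x :=
    hlowl.eventually_const_lt (by nlinarith)
  filter_upwards [e1, e2] with n h1 h2
  rw [Real.dist_eq, abs_sub_lt_iff]
  constructor
  · linarith [hTup n]
  · linarith [hTlow n]
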